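/- Let w : closure(Ω) × [0,T) → (0,∞) be C¹ in t and C¹ in x, u ≥ 0 continuous, D continuous positive semidefinite, and suppose w_t = -uw. Then (1/2) d/dt ∫_Ω (∇w · D∇w)/w = -(1/2) ∫_Ω u (∇w · D∇w)/w - ∫_Ω ∇u · D∇w ≤ -∫_Ω ∇u · D∇w. -/

import Mathlib

set_option maxHeartbeats 1000000


open MeasureTheory Real Matrix Set

/-- Gradient of a scalar field via `fderiv`. -/
noncomputable def grad {n : ℕ} (f : (Fin n → ℝ) → ℝ) (x : Fin n → ℝ) : Fin n → ℝ :=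
  fun i => fderiv ℝ f x (Pi.single i 1)


lemma quadDeriv {n : ℕ} (M : Matrix (Fin n) (Fin n) ℝ) (v p : Fin n → ℝ) (τ : ℝ) :
    HasDerivAt (fun s : ℝ => (v - s • p) ⬝ᵥ M.mulVec (v - s • p))
      ((-p) ⬝ᵥ M.mulVec (v - τ • p) + (v - τ • p) ⬝ᵥ M.mulVec (-p)) τ := by
  have h1 : ∀ i, HasDerivAt (fun s : ℝ => v i - s * p i) (-p i) τ := fun i => by
    simpa using (hasDerivAt_mul_const (p i)).const_sub (v i)
  have h2 : ∀ i, HasDerivAt (fun s : ℝ => ∑ j, M i j * (v j - s * p j)) (∑ j, M i j * (-p j)) τ :=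
    fun i => HasDerivAt.fun_sum (fun j _ => ((h1 j).const_mul (M i j)))
  have h3 := HasDerivAt.fun_sum (u := Finset.univ)
    (A := fun i (s : ℝ) => (v i - s * p i) * ∑ j, M i j * (v j - s * p j))
    (A' := fun i => (-p i) * (∑ j, M i j * (v j - τ * p j)) + (v i - τ * p i) * ∑ j, M i j * (-p j))
    (fun i _ => (h1 i).mul (h2 i))
  have he : (fun s : ℝ => (v - s • p) ⬝ᵥ M.mulVec (v - s • p))
      = fun s : ℝ => ∑ i, (v i - s * p i) * ∑ j, M i j * (v j - s * p j) := by
    funext s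
    simp [dotProduct, Matrix.mulVec, mul_comm]
  rw [he]
  refine h3.congr_deriv ?_
  simp [dotProduct, Matrix.mulVec, Finset.sum_add_distrib, mul_comm]

lemma FhasDeriv {n : ℕ} (M : Matrix (Fin n) (Fin n) ℝ) (v p : Fin n → ℝ) (c b τ : ℝ) :
    HasDerivAt (fun s : ℝ => Real.exp (-(c * s)) / b * ((v - s • p) ⬝ᵥ M.mulVec (v - s • p)))
      ((-c) * Real.exp (-(c * τ)) / b * ((v - τ • p) ⬝ᵥ M.mulVec (v - τ • p))
        + Real.exp (-(c * τ)) / b *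
          ((-p) ⬝ᵥ M.mulVec (v - τ • p) + (v - τ • p) ⬝ᵥ M.mulVec (-p))) τ := by
  have h1 : HasDerivAt (fun s : ℝ => -(c * s)) (-c) τ := by
    simpa using ((hasDerivAt_id τ).const_mul c).fun_neg
  have h3 := (h1.exp.div_const b).fun_mul (quadDeriv M v p τ)
  refine h3.congr_deriv ?_
  ring

lemma grad_continuous {n : ℕ} {f : (Fin n → ℝ) → ℝ} (hf : ContDiff ℝ 1 f) :
    Continuous (grad f) := by
  apply continuous_pi
  intro i
  exact (hf.continuous_fderiv one_ne_zero).clm_apply continuous_const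

lemma grad_mul_exp {n : ℕ} {a u : (Fin n → ℝ) → ℝ} (ha : ContDiff ℝ 1 a) (hu : ContDiff ℝ 1 u)
    (τ : ℝ) (x : Fin n → ℝ) :
    grad (fun y => a y * Real.exp (-(u y * τ))) x
      = Real.exp (-(u x * τ)) • (grad a x - τ • (a x • grad u x)) := by
  have h1 : HasFDerivAt a (fderiv ℝ a x) x := (ha.differentiable one_ne_zero x).hasFDerivAt
  have h2 : HasFDerivAt u (fderiv ℝ u x) x := (hu.differentiable one_ne_zero x).hasFDerivAt
  have h3 : HasFDerivAt (fun y => -(u y * τ)) (-(τ • fderiv ℝ u x)) x := by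
    simpa using ((h2.mul_const τ).fun_neg)
  have h5 := h1.fun_mul h3.exp
  funext i
  simp only [grad, h5.fderiv]
  simp only [grad, ContinuousLinearMap.add_apply, ContinuousLinearMap.smul_apply,
    ContinuousLinearMap.neg_apply, Pi.smul_apply, Pi.sub_apply, smul_eq_mul]
  ring

lemma ode_sol {c T : ℝ} {f : ℝ → ℝ} (hf : ∀ s ∈ Ico (0:ℝ) T, HasDerivAt f (-(c * f s)) s)
    {t : ℝ} (ht : t ∈ Ico (0:ℝ) T) : f t = f 0 * Real.exp (-(c * t)) := by
  set g : ℝ → ℝ := fun s => f s * Real.exp (c * s) with hg_def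
  have hg : ∀ s ∈ Ico (0:ℝ) T, HasDerivAt g 0 s := by
    intro s hs
    have he : HasDerivAt (fun s : ℝ => Real.exp (c * s)) (Real.exp (c * s) * c) s := by
      simpa using ((hasDerivAt_id s).const_mul c).exp
    have := (hf s hs).fun_mul he
    refine this.congr_deriv ?_
    ring
  have hcont : ContinuousOn g (Icc 0 t) := by
    intro s hs
    exact (hg s ⟨hs.1, lt_of_le_of_lt hs.2 ht.2⟩).continuousAt.continuousWithinAt
  have hkey := constant_of_has_deriv_right_zero hcont
    (fun s hs => (hg s ⟨hs.1, lt_of_lt_of_le hs.2 (le_of_lt ht.2)⟩).hasDerivWithinAt)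
    t (right_mem_Icc.2 ht.1)
  have h0 : f t * Real.exp (c * t) = f 0 := by simpa [hg_def] using hkey
  have hexp : Real.exp (c * t) ≠ 0 := Real.exp_ne_zero _
  rw [Real.exp_neg]
  field_simp
  linarith [h0]

lemma contOn_quad {n : ℕ} {α : Type*} [TopologicalSpace α] {s : Set α}
    {f g : α → (Fin n → ℝ)} {D : α → Matrix (Fin n) (Fin n) ℝ}
    (hf : ContinuousOn f s) (hD : ContinuousOn D s) (hg : ContinuousOn g s) :
    ContinuousOn (fun x => f x ⬝ᵥ (D x).mulVec (g x)) s := by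
  simp only [dotProduct, Matrix.mulVec]
  apply continuousOn_finset_sum
  intro i _
  apply ContinuousOn.mul
  · exact (continuous_apply i).comp_continuousOn hf
  · apply continuousOn_finset_sum
    intro j _
    apply ContinuousOn.mul
    · exact ((continuous_apply j).comp (continuous_apply i)).comp_continuousOn hD
    · exact (continuous_apply j).comp_continuousOn hg

/-- evolution of the weighted Dirichlet quantity
`(1/2)∫ (∇w·D∇w)/w` under `w_t = -uw`. -/
theorem stmt18 (n : ℕ) (Ω : Set (Fin n → ℝ)) (hΩ : IsOpen Ω) (hΩb : Bornology.IsBounded Ω)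
    (T : ℝ) (hT : 0 < T)
    (D : (Fin n → ℝ) → Matrix (Fin n) (Fin n) ℝ)
    (hDc : ContinuousOn D (closure Ω))
    (hDpsd : ∀ x ∈ closure Ω, (D x).PosSemidef)
    (u : (Fin n → ℝ) → ℝ) (hu_c : ContDiff ℝ 1 u) (hu_nonneg : ∀ x, 0 ≤ u x)
    (w : (Fin n → ℝ) → ℝ → ℝ)
    (hw_pos : ∀ x ∈ closure Ω, ∀ t ∈ Ico 0 T, 0 < w x t)
    (hw_x : ∀ t ∈ Ico 0 T, ContDiff ℝ 1 (fun x => w x t))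
    (heq_w : ∀ x ∈ closure Ω, ∀ t ∈ Ico 0 T,
      HasDerivAt (w x) (-(u x * w x t)) t) :
    ∀ t ∈ Ioo 0 T,
      HasDerivAt
        (fun τ => (1/2) * ∫ x in Ω,
          (grad (fun y => w y τ) x ⬝ᵥ (D x).mulVec (grad (fun y => w y τ) x)) / w x τ)
        (-(1/2) * (∫ x in Ω,
            u x * (grad (fun y => w y t) x ⬝ᵥ (D x).mulVec (grad (fun y => w y t) x))
              / w x t)
          - ∫ x in Ω, grad u x ⬝ᵥ (D x).mulVec (grad (fun y => w y t) x)) t ∧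
      -(1/2) * (∫ x in Ω,
            u x * (grad (fun y => w y t) x ⬝ᵥ (D x).mulVec (grad (fun y => w y t) x))
              / w x t)
          - (∫ x in Ω, grad u x ⬝ᵥ (D x).mulVec (grad (fun y => w y t) x))
        ≤ -∫ x in Ω, grad u x ⬝ᵥ (D x).mulVec (grad (fun y => w y t) x) := by
  intro t ht
  have htI : t ∈ Ico (0:ℝ) T := ⟨ht.1.le, ht.2⟩
  have h0I : (0:ℝ) ∈ Ico (0:ℝ) T := ⟨le_refl 0, hT⟩
  have hmeas : MeasurableSet Ω := hΩ.measurableSet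
  have hK : IsCompact (closure Ω) := hΩb.isCompact_closure
  set a : (Fin n → ℝ) → ℝ := fun x => w x 0 with ha_def
  have ha : ContDiff ℝ 1 a := hw_x 0 h0I
  have ha_pos : ∀ x ∈ closure Ω, 0 < a x := fun x hx => hw_pos x hx 0 h0I
  have hw_eq : ∀ x ∈ closure Ω, ∀ τ ∈ Ico (0:ℝ) T, w x τ = a x * Real.exp (-(u x * τ)) :=
    fun x hx τ hτ => ode_sol (fun s hs => heq_w x hx s hs) hτ
  set p : (Fin n → ℝ) → (Fin n → ℝ) := fun x => a x • grad u x with hp_def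
  set G : ℝ → (Fin n → ℝ) → (Fin n → ℝ) := fun τ x => grad a x - τ • p x with hG_def
  set F : ℝ → (Fin n → ℝ) → ℝ :=
    fun τ x => Real.exp (-(u x * τ)) / a x * ((grad a x - τ • p x) ⬝ᵥ (D x).mulVec (grad a x - τ • p x)) with hF_def
  set F' : ℝ → (Fin n → ℝ) → ℝ :=
    fun τ x => (-(u x)) * Real.exp (-(u x * τ)) / a x * ((grad a x - τ • p x) ⬝ᵥ (D x).mulVec (grad a x - τ • p x))
      + Real.exp (-(u x * τ)) / a x *
        ((-(p x)) ⬝ᵥ (D x).mulVec (grad a x - τ • p x) + (grad a x - τ • p x) ⬝ᵥ (D x).mulVec (-(p x))) with hF'_def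
  -- gradient identity on Ω
  have hgrad : ∀ τ ∈ Ico (0:ℝ) T, ∀ x ∈ Ω,
      grad (fun y => w y τ) x = Real.exp (-(u x * τ)) • (grad a x - τ • p x) := by
    intro τ hτ x hx
    have heq : (fun y => w y τ) =ᶠ[nhds x] (fun y => a y * Real.exp (-(u y * τ))) := by
      filter_upwards [hΩ.mem_nhds hx] with y hy
      exact hw_eq y (subset_closure hy) τ hτ
    have : grad (fun y => w y τ) x = grad (fun y => a y * Real.exp (-(u y * τ))) x := by
      funext i
      simp only [grad, heq.fderiv_eq]
    rw [this, grad_mul_exp ha hu_c τ x]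
  -- integrand equality on Ω
  have hInt : ∀ τ ∈ Ico (0:ℝ) T, ∀ x ∈ Ω,
      (grad (fun y => w y τ) x ⬝ᵥ (D x).mulVec (grad (fun y => w y τ) x)) / w x τ = F τ x := by
    intro τ hτ x hx
    have ha0 : a x ≠ 0 := (ha_pos x (subset_closure hx)).ne'
    have he0 : Real.exp (-(u x * τ)) ≠ 0 := Real.exp_ne_zero _
    rw [hgrad τ hτ x hx, hw_eq x (subset_closure hx) τ hτ]
    simp only [hF_def, smul_dotProduct, Matrix.mulVec_smul, dotProduct_smul,
      smul_eq_mul]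
    field_simp
  -- joint continuity
  have hS : (univ : Set ℝ) ×ˢ closure Ω = Prod.snd ⁻¹' closure Ω := by
    ext q; simp [Set.mem_prod]
  have hu_cont : Continuous u := hu_c.continuous
  have ha_cont : Continuous a := ha.continuous
  have hgu : Continuous (grad u) := grad_continuous hu_c
  have hga : Continuous (grad a) := grad_continuous ha
  have hp_cont : Continuous p := ha_cont.smul hgu
  have hG2 : Continuous (fun q : ℝ × (Fin n → ℝ) => grad a q.2 - q.1 • p q.2) :=
    (hga.comp continuous_snd).sub (continuous_fst.smul (hp_cont.comp continuous_snd))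
  have hD2 : ContinuousOn (fun q : ℝ × (Fin n → ℝ) => D q.2) ((univ : Set ℝ) ×ˢ closure Ω) :=
    hDc.comp continuous_snd.continuousOn (fun q hq => hq.2)
  have he2 : Continuous (fun q : ℝ × (Fin n → ℝ) => Real.exp (-(u q.2 * q.1))) :=
    (((hu_cont.comp continuous_snd).mul continuous_fst).neg).rexp
  have hQ2 : ContinuousOn (fun q : ℝ × (Fin n → ℝ) =>
      (grad a q.2 - q.1 • p q.2) ⬝ᵥ (D q.2).mulVec (grad a q.2 - q.1 • p q.2))
      ((univ : Set ℝ) ×ˢ closure Ω) :=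
    contOn_quad hG2.continuousOn hD2 hG2.continuousOn
  have hdQ2 : ContinuousOn (fun q : ℝ × (Fin n → ℝ) =>
      (-(p q.2)) ⬝ᵥ (D q.2).mulVec (grad a q.2 - q.1 • p q.2)
        + (grad a q.2 - q.1 • p q.2) ⬝ᵥ (D q.2).mulVec (-(p q.2)))
      ((univ : Set ℝ) ×ˢ closure Ω) := by
    apply ContinuousOn.add
    · exact contOn_quad ((hp_cont.comp continuous_snd).neg.continuousOn) hD2 hG2.continuousOn
    · exact contOn_quad hG2.continuousOn hD2 ((hp_cont.comp continuous_snd).neg.continuousOn)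
  have ha2ne : ∀ q : ℝ × (Fin n → ℝ), q ∈ (univ : Set ℝ) ×ˢ closure Ω → a q.2 ≠ 0 :=
    fun q hq => (ha_pos q.2 hq.2).ne'
  have hF2 : ContinuousOn (fun q : ℝ × (Fin n → ℝ) => F q.1 q.2)
      ((univ : Set ℝ) ×ˢ closure Ω) := by
    exact (he2.continuousOn.div (ha_cont.comp continuous_snd).continuousOn ha2ne).mul hQ2
  have hF'2 : ContinuousOn (fun q : ℝ × (Fin n → ℝ) => F' q.1 q.2)
      ((univ : Set ℝ) ×ˢ closure Ω) := by
    apply ContinuousOn.add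
    · exact ((((hu_cont.comp continuous_snd).neg.mul he2).continuousOn.div
        (ha_cont.comp continuous_snd).continuousOn ha2ne)).mul hQ2
    · exact (he2.continuousOn.div (ha_cont.comp continuous_snd).continuousOn ha2ne).mul hdQ2
  -- x-only continuity on closure Ω
  have hFc : ∀ τ : ℝ, ContinuousOn (F τ) (closure Ω) := by
    intro τ
    have := hF2.comp (Continuous.prodMk_right τ).continuousOn
      (fun x (hx : x ∈ closure Ω) => ⟨mem_univ τ, hx⟩)
    exact this
  have hF'c : ∀ τ : ℝ, ContinuousOn (F' τ) (closure Ω) := by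
    intro τ
    exact hF'2.comp (Continuous.prodMk_right τ).continuousOn
      (fun x (hx : x ∈ closure Ω) => ⟨mem_univ τ, hx⟩)
  -- bound from compactness
  have hKcomp : IsCompact ((Icc (t-1) (t+1) : Set ℝ) ×ˢ closure Ω) := isCompact_Icc.prod hK
  obtain ⟨C, hC⟩ := hKcomp.exists_bound_of_continuousOn
    (hF'2.mono (prod_mono (subset_univ _) subset_rfl))
  -- apply dominated differentiation
  have key := hasDerivAt_integral_of_dominated_loc_of_deriv_le
    (μ := volume.restrict Ω) (F := F) (F' := F') (x₀ := t) (s := Metric.ball t 1) (bound := fun _ => C)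
    (Metric.ball_mem_nhds t one_pos)
    (Filter.Eventually.of_forall (fun τ => ((hFc τ).mono subset_closure).aestronglyMeasurable hmeas))
    (((hFc t).integrableOn_compact hK).mono_set subset_closure)
    (((hF'c t).mono subset_closure).aestronglyMeasurable hmeas)
    (by
      filter_upwards [ae_restrict_mem hmeas] with x hx
      intro τ hτ
      have hτ' : τ ∈ Icc (t-1) (t+1) := by
        rw [Real.ball_eq_Ioo] at hτ
        exact Ioo_subset_Icc_self hτ
      exact hC (τ, x) ⟨hτ', subset_closure hx⟩)
    (integrableOn_const hΩb.measure_lt_top.ne)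
    (by
      filter_upwards [ae_restrict_mem hmeas] with x hx
      intro τ hτ
      have := FhasDeriv (D x) (grad a x) (p x) (u x) (a x) τ
      exact this)
  obtain ⟨hF'int, hderiv⟩ := key
  -- symmetry of D on closure Ω
  have hsymm : ∀ x ∈ closure Ω, ∀ v v' : Fin n → ℝ,
      v ⬝ᵥ (D x).mulVec v' = v' ⬝ᵥ (D x).mulVec v := by
    intro x hx v v'
    have hsym : (D x)ᵀ = D x := by
      have := (hDpsd x hx).1
      simpa [Matrix.IsHermitian, Matrix.conjTranspose_eq_transpose_of_trivial] using this
    have h := Matrix.mulVec_transpose (D x) v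
    rw [hsym] at h
    rw [Matrix.dotProduct_mulVec, ← h, dotProduct_comm]
  -- explicit integrands
  set JA : (Fin n → ℝ) → ℝ := fun x =>
    u x * Real.exp (-(u x * t)) / a x *
      ((grad a x - t • p x) ⬝ᵥ (D x).mulVec (grad a x - t • p x)) with hJA_def
  set JB : (Fin n → ℝ) → ℝ := fun x =>
    Real.exp (-(u x * t)) * (grad u x ⬝ᵥ (D x).mulVec (grad a x - t • p x)) with hJB_def
  have hGt_cont : Continuous (fun x => grad a x - t • p x) :=
    hga.sub (hp_cont.const_smul t)
  have hQt : ContinuousOn (fun x => (grad a x - t • p x) ⬝ᵥ (D x).mulVec (grad a x - t • p x))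
      (closure Ω) := contOn_quad hGt_cont.continuousOn hDc hGt_cont.continuousOn
  have hJAc : ContinuousOn JA (closure Ω) := by
    apply ContinuousOn.mul _ hQt
    exact (hu_cont.mul (((hu_cont.mul continuous_const).neg).rexp)).continuousOn.div
      ha_cont.continuousOn (fun x hx => (ha_pos x hx).ne')
  have hJBc : ContinuousOn JB (closure Ω) := by
    apply ContinuousOn.mul (((hu_cont.mul continuous_const).neg).rexp).continuousOn
    exact contOn_quad hgu.continuousOn hDc hGt_cont.continuousOn
  have hJAint : IntegrableOn JA Ω := (hJAc.integrableOn_compact hK).mono_set subset_closure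
  have hJBint : IntegrableOn JB Ω := (hJBc.integrableOn_compact hK).mono_set subset_closure
  -- pointwise identities on Ω at time t
  have hAeq : (∫ x in Ω, u x * (grad (fun y => w y t) x ⬝ᵥ (D x).mulVec (grad (fun y => w y t) x))
      / w x t) = ∫ x in Ω, JA x := by
    apply setIntegral_congr_fun hmeas
    intro x hx
    have ha0 : a x ≠ 0 := (ha_pos x (subset_closure hx)).ne'
    have he0 : Real.exp (-(u x * t)) ≠ 0 := Real.exp_ne_zero _
    dsimp only
    rw [hgrad t htI x hx, hw_eq x (subset_closure hx) t htI]
    simp only [hJA_def, smul_dotProduct, Matrix.mulVec_smul, dotProduct_smul,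
      smul_eq_mul]
    field_simp
  have hBeq : (∫ x in Ω, grad u x ⬝ᵥ (D x).mulVec (grad (fun y => w y t) x))
      = ∫ x in Ω, JB x := by
    apply setIntegral_congr_fun hmeas
    intro x hx
    dsimp only
    rw [hgrad t htI x hx]
    simp only [hJB_def, Matrix.mulVec_smul, dotProduct_smul, smul_eq_mul]
  have hF'eq : ∀ x ∈ Ω, F' t x = -(JA x) - 2 * JB x := by
    intro x hx
    have ha0 : a x ≠ 0 := (ha_pos x (subset_closure hx)).ne'
    have h2nd : (grad a x - t • p x) ⬝ᵥ (D x).mulVec (-(p x))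
        = (-(p x)) ⬝ᵥ (D x).mulVec (grad a x - t • p x) :=
      hsymm x (subset_closure hx) _ _
    simp only [hF'_def, hJA_def, hJB_def, h2nd]
    simp only [hF'_def, hJA_def, hJB_def, h2nd, hp_def, neg_dotProduct,
      smul_dotProduct, smul_eq_mul]
    field_simp
    ring
  have hF'val : (∫ x, F' t x ∂(volume.restrict Ω))
      = -(∫ x in Ω, JA x) - 2 * ∫ x in Ω, JB x := by
    have : (∫ x, F' t x ∂(volume.restrict Ω)) = ∫ x in Ω, (-(JA x) - 2 * JB x) :=
      setIntegral_congr_fun hmeas (fun x hx => hF'eq x hx)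
    have h1 : Integrable (fun x => -(JA x)) (volume.restrict Ω) := hJAint.neg
    have h2 : Integrable (fun x => 2 * JB x) (volume.restrict Ω) := hJBint.const_mul 2
    rw [this, integral_sub h1 h2, integral_neg, integral_const_mul]
  -- assemble derivative statement
  have hd2 := hderiv.const_mul (1/2 : ℝ)
  have hfun : (fun τ => (1/2 : ℝ) * ∫ x in Ω,
      (grad (fun y => w y τ) x ⬝ᵥ (D x).mulVec (grad (fun y => w y τ) x)) / w x τ)
      =ᶠ[nhds t] (fun τ => (1/2 : ℝ) * ∫ x, F τ x ∂(volume.restrict Ω)) := by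
    filter_upwards [isOpen_Ioo.mem_nhds ht] with τ hτ
    congr 1
    exact setIntegral_congr_fun hmeas (fun x hx => hInt τ ⟨hτ.1.le, hτ.2⟩ x hx)
  have hmain := hd2.congr_of_eventuallyEq hfun
  have hval : (1/2 : ℝ) * (∫ x, F' t x ∂(volume.restrict Ω))
      = -(1/2) * (∫ x in Ω,
            u x * (grad (fun y => w y t) x ⬝ᵥ (D x).mulVec (grad (fun y => w y t) x))
              / w x t)
          - ∫ x in Ω, grad u x ⬝ᵥ (D x).mulVec (grad (fun y => w y t) x) := by
    rw [hF'val, hAeq, hBeq]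
    ring
  rw [hval] at hmain
  -- nonnegativity of A
  have hA_nonneg : 0 ≤ ∫ x in Ω,
      u x * (grad (fun y => w y t) x ⬝ᵥ (D x).mulVec (grad (fun y => w y t) x)) / w x t := by
    apply setIntegral_nonneg hmeas
    intro x hx
    have hq := (hDpsd x (subset_closure hx)).dotProduct_mulVec_nonneg (grad (fun y => w y t) x)
    simp only [star_trivial] at hq
    exact div_nonneg (mul_nonneg (hu_nonneg x) hq)
      (hw_pos x (subset_closure hx) t htI).le
  exact ⟨hmain, by linarith⟩
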